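/- For every integer m ≥ 1 and nonnegative real weights β_1,…,β_m and α_0,…,α_m with Σ_{j=1}^m β_j + Σ_{i=0}^m α_i = 1, there exists a binary tree with m internal nodes whose search cost (with the β's attached to the internal nodes in symmetric order and the α's attached to the leaves in left-to-right order) satisfies C ≤ H(α_0, β_1, α_1, …, β_m, α_m) + 2. -/

import Mathlib

/-- A (full) binary tree: every internal node has exactly two children. -/
inductive BTree where
  | leaf : BTree
  | node : BTree → BTree → BTree

namespace BTree

/-- Depths of the leaves, in left-to-right order. -/
def leafDepths : BTree → List ℕ
  | leaf => [0]
  | node l r => l.leafDepths.map (· + 1) ++ r.leafDepths.map (· + 1)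

/-- Depths of the internal nodes, in symmetric (in-)order. -/
def internalDepths : BTree → List ℕ
  | leaf => []
  | node l r => l.internalDepths.map (· + 1) ++ [0] ++ r.internalDepths.map (· + 1)

end BTree

namespace Meh

/-- a fallback full binary tree with `n` internal nodes -/
def comb : ℕ → BTree
  | 0 => .leaf
  | n+1 => .node .leaf (comb n)

@[simp] lemma comb_leaf_len (n : ℕ) : (comb n).leafDepths.length = n + 1 := by
  induction n with
  | zero => simp [comb, BTree.leafDepths]
  | succ n ih => simp [comb, BTree.leafDepths, ih]

@[simp] lemma comb_int_len (n : ℕ) : (comb n).internalDepths.length = n := by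
  induction n with
  | zero => simp [comb, BTree.internalDepths]
  | succ n ih => simp [comb, BTree.internalDepths, ih]

abbrev El := ℝ × ℝ

def goLeft (mid : ℝ) (e : El) : Prop := e.1 + e.2 ≤ mid ∧ e.1 < mid

def Rel (e f : El) : Prop :=
  0 ≤ e.2 ∧ e.1 + e.2 ≤ f.1 ∧ ((0 < e.2 ∨ 0 < f.2) → e.1 + e.2 < f.1)

lemma Rel.trans {e f g : El} (h1 : Rel e f) (h2 : Rel f g) : Rel e g := by
  obtain ⟨he, hef, hef'⟩ := h1
  obtain ⟨hf, hfg, hfg'⟩ := h2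
  refine ⟨he, by linarith, ?_⟩
  rintro (hp | hp)
  · have := hef' (Or.inl hp); linarith
  · have := hfg' (Or.inr hp); linarith

def elems (e₀ : El) (ps : List (El × El)) : List El :=
  e₀ :: ps.flatMap fun p => [p.1, p.2]

@[simp] lemma elems_nil (e₀ : El) : elems e₀ [] = [e₀] := rfl

@[simp] lemma elems_cons (e₀ : El) (p : El × El) (ps : List (El × El)) :
    elems e₀ (p :: ps) = e₀ :: p.1 :: elems p.2 ps := rfl

lemma goLeft_of_rel {mid : ℝ} {e f : El} (hr : Rel e f) (hf : goLeft mid f) :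
    goLeft mid e := by
  obtain ⟨he, hef, _⟩ := hr
  exact ⟨le_trans hef hf.2.le, by linarith [hf.2]⟩

/-- existence of a valid split index (no ordering hypotheses needed). -/
lemma ex_split (mid : ℝ) : ∀ (ps : List (El × El)) (e₀ : El), goLeft mid e₀ →
    (∃ e ∈ elems e₀ ps, ¬ goLeft mid e) →
    ∃ i : Fin ps.length,
      (∀ e ∈ elems e₀ (ps.take i), goLeft mid e) ∧
      (¬ goLeft mid (ps.get i).1 ∨ ¬ goLeft mid (ps.get i).2) := by
  intro ps
  induction ps with
  | nil =>
    intro e₀ h0 hex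
    simp only [elems_nil, List.mem_singleton] at hex
    obtain ⟨e, rfl, he⟩ := hex
    exact absurd h0 he
  | cons p ps ih =>
    intro e₀ h0 hex
    by_cases h1 : goLeft mid p.1
    · by_cases h2 : goLeft mid p.2
      · have hex' : ∃ e ∈ elems p.2 ps, ¬ goLeft mid e := by
          obtain ⟨e, hmem, he⟩ := hex
          simp only [elems_cons, List.mem_cons] at hmem
          rcases hmem with rfl | rfl | hmem
          · exact absurd h0 he
          · exact absurd h1 he
          · exact ⟨e, hmem, he⟩
        obtain ⟨i, hL, hR⟩ := ih p.2 h2 hex'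
        refine ⟨⟨i + 1, by simpa using i.2⟩, ?_, ?_⟩
        · intro e hmem
          simp only [List.take_succ_cons, elems_cons, List.mem_cons] at hmem
          rcases hmem with rfl | rfl | hmem
          · exact h0
          · exact h1
          · exact hL e hmem
        · simpa using hR
      · exact ⟨⟨0, by simp⟩, by simpa using h0, Or.inr h2⟩
    · exact ⟨⟨0, by simp⟩, by simpa using h0, Or.inl h1⟩

open Classical in
noncomputable def build : ℕ → ℝ → ℝ → El → List (El × El) → BTree
  | 0, _, _, _, ps => comb ps.length
  | (n+1), a, h, e₀, ps =>
    if ps = [] then .leaf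
    else if h0 : goLeft (a + h/2) e₀ then
      if hall : ∀ e ∈ elems e₀ ps, goLeft (a + h/2) e then
        build n a (h/2) e₀ ps
      else
        let i := (ex_split (a + h/2) ps e₀ h0 (by push_neg at hall; exact hall)).choose
        .node (build n a (h/2) e₀ (ps.take i))
              (build n (a + h/2) (h/2) (ps.get i).2 (ps.drop (i+1)))
    else build n (a + h/2) (h/2) e₀ ps



lemma half_pow_le {t d : ℕ} (h : ((2:ℝ)⁻¹)^t ≤ (2⁻¹)^d) : d ≤ t := by
  have h2 : ((2:ℝ))^d ≤ 2^t := by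
    have := inv_anti₀ (by positivity) h
    simpa [inv_pow] using this
  exact (pow_le_pow_iff_right₀ (by norm_num : (1:ℝ) < 2)).mp h2

lemma half_pow_mono {t d : ℕ} (h : d ≤ t) : ((2:ℝ)⁻¹)^t ≤ (2⁻¹)^d :=
  pow_le_pow_of_le_one (by norm_num) (by norm_num) h

/-- dyadic no-straddle: an aligned dyadic interval of length ≤ h/2 inside an
aligned window cannot straddle the midpoint. -/
lemma right_of_mid {d t k j : ℕ} {e : ℝ × ℝ}
    (he2 : e.2 = ((2:ℝ)⁻¹)^t) (he1 : e.1 = (k:ℝ) * ((2:ℝ)⁻¹)^t)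
    (hle : e.2 ≤ ((2:ℝ)⁻¹)^(d+1))
    (hng : ¬ ((e.1 + e.2 ≤ ((2*j+1:ℕ):ℝ) * ((2:ℝ)⁻¹)^(d+1)) ∧ e.1 < ((2*j+1:ℕ):ℝ) * ((2:ℝ)⁻¹)^(d+1))) :
    ((2*j+1:ℕ):ℝ) * ((2:ℝ)⁻¹)^(d+1) ≤ e.1 := by
  set lam : ℝ := ((2:ℝ)⁻¹)^t with hlam
  have ht : d + 1 ≤ t := half_pow_le (by rw [← hlam, ← he2]; exact hle)
  have hpos : (0:ℝ) < lam := by positivity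
  have hrep : ((2:ℝ)⁻¹)^(d+1) = ((2^(t-(d+1)) : ℕ) : ℝ) * lam := by
    have h1 : lam = ((2:ℝ)⁻¹)^(t-(d+1)) * ((2:ℝ)⁻¹)^(d+1) := by
      rw [hlam, ← pow_add, Nat.sub_add_cancel ht]
    push_cast
    rw [h1, ← mul_assoc, ← mul_pow]
    norm_num
  set M : ℕ := (2*j+1) * 2^(t-(d+1)) with hM
  have hmid : ((2*j+1:ℕ):ℝ) * ((2:ℝ)⁻¹)^(d+1) = (M:ℝ) * lam := by
    rw [hrep, hM]; push_cast; ring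
  rw [hmid]
  by_contra hlt
  push_neg at hlt
  rw [he1] at hlt
  have hkM : k < M := by
    have := (mul_lt_mul_iff_of_pos_right hpos).mp hlt
    exact_mod_cast this
  have hk1 : (k:ℝ) + 1 ≤ (M:ℝ) := by exact_mod_cast hkM
  apply hng
  rw [hmid, he1, he2]
  constructor
  · calc (k:ℝ) * lam + lam = ((k:ℝ)+1) * lam := by ring
      _ ≤ (M:ℝ) * lam := by
        exact mul_le_mul_of_nonneg_right hk1 hpos.le
  · exact (mul_lt_mul_iff_of_pos_right hpos).mpr (by exact_mod_cast hkM)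



@[simp] lemma leafDepths_node (l r : BTree) :
    (BTree.node l r).leafDepths = l.leafDepths.map (· + 1) ++ r.leafDepths.map (· + 1) := rfl

@[simp] lemma internalDepths_node (l r : BTree) :
    (BTree.node l r).internalDepths
      = l.internalDepths.map (· + 1) ++ [0] ++ r.internalDepths.map (· + 1) := rfl

lemma forall₂_of_true {α β : Type*} {R : α → β → Prop} {l₁ : List α} {l₂ : List β}
    (h : ∀ a ∈ l₁, ∀ b, R a b) (hlen : l₁.length = l₂.length) : List.Forall₂ R l₁ l₂ := by
  rw [List.forall₂_iff_get]
  exact ⟨hlen, fun i h₁ h₂ => h _ (List.get_mem _ _) _⟩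

lemma elems_append (e₀ : El) (l₁ l₂ : List (El × El)) :
    elems e₀ (l₁ ++ l₂) = elems e₀ l₁ ++ l₂.flatMap (fun p => [p.1, p.2]) := by
  simp [elems]

lemma elems_eq_cons_flat (e₀ : El) (ps : List (El × El)) :
    elems e₀ ps = e₀ :: ps.flatMap (fun p => [p.1, p.2]) := rfl

/-- A positive element of a subproblem with at least two elements has length
at most half the window. -/
lemma elem_small {d j : ℕ} {e₀ : El} {ps : List (El × El)} (hps : ps ≠ [])
    (H2 : ∀ e ∈ elems e₀ ps, 0 ≤ e.2 ∧ (j:ℝ) * ((2:ℝ)⁻¹)^d ≤ e.1 ∧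
        e.1 + e.2 ≤ (j:ℝ) * ((2:ℝ)⁻¹)^d + ((2:ℝ)⁻¹)^d)
    (H3 : List.Pairwise Rel (elems e₀ ps))
    (H4 : ∀ e ∈ elems e₀ ps, 0 < e.2 →
        ∃ t k : ℕ, e.2 = ((2:ℝ)⁻¹)^t ∧ e.1 = (k:ℝ) * ((2:ℝ)⁻¹)^t)
    {e : El} (he : e ∈ elems e₀ ps) (hpos : 0 < e.2) : e.2 ≤ ((2:ℝ)⁻¹)^(d+1) := by
  obtain ⟨t, k, ht2, ht1⟩ := H4 e he hpos
  obtain ⟨he0, hea, heb⟩ := H2 e he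
  have hle : e.2 ≤ ((2:ℝ)⁻¹)^d := by linarith
  have hdt : d ≤ t := half_pow_le (by rw [← ht2]; exact hle)
  rcases lt_or_eq_of_le hdt with hlt | heq
  · exact le_trans (le_of_eq ht2) (half_pow_mono hlt)
  · -- e fills the whole window: impossible since there is another element
    exfalso
    have he2 : e.2 = ((2:ℝ)⁻¹)^d := by rw [ht2, ← heq]
    have he1 : e.1 = (j:ℝ) * ((2:ℝ)⁻¹)^d := by linarith
    cases ps with
    | nil => exact hps rfl
    | cons p ps' =>
      rw [elems_cons] at he H2 H3
      have hpair := List.pairwise_cons.mp H3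
      rcases List.mem_cons.mp he with rfl | htail
      · -- e is the head; use the next element p.1
        have hrel : Rel e p.1 := hpair.1 p.1 (by simp)
        have hstrict := hrel.2.2 (Or.inl hpos)
        have h21 := H2 p.1 (by simp)
        have hp2 : (0:ℝ) ≤ p.1.2 := h21.1
        have hp1b := h21.2.2
        rw [he1, he2] at hstrict
        linarith
      · -- e is in the tail; use the head e₀
        have hrel : Rel e₀ e := hpair.1 e htail
        have hstrict := hrel.2.2 (Or.inr hpos)
        have h20 := H2 e₀ (by simp)
        rw [he1] at hstrict
        have : (0:ℝ) < ((2:ℝ)⁻¹)^d := by positivity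
        linarith [h20.1, h20.2.1]

lemma not_goLeft_zero {mid : ℝ} {e : El} (hz : e.2 = 0) (hng : ¬ goLeft mid e) :
    mid ≤ e.1 := by
  by_contra hlt
  push_neg at hlt
  exact hng ⟨by rw [hz]; linarith, hlt⟩


lemma mem_elems_of_leafmem {e e₀ : El} {ps : List (El × El)}
    (he : e ∈ e₀ :: ps.map (·.2)) : e ∈ elems e₀ ps := by
  rcases List.mem_cons.mp he with rfl | he'
  · exact List.mem_cons_self
  · obtain ⟨p, hp, hep⟩ := List.mem_map.mp he'
    simp only [elems_eq_cons_flat, List.mem_cons]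
    exact Or.inr (List.mem_flatMap.mpr ⟨p, hp, by simp [← hep]⟩)

lemma mem_elems_of_itemmem {e e₀ : El} {ps : List (El × El)}
    (he : e ∈ ps.map (·.1)) : e ∈ elems e₀ ps := by
  obtain ⟨p, hp, hep⟩ := List.mem_map.mp he
  simp only [elems_eq_cons_flat, List.mem_cons]
  exact Or.inr (List.mem_flatMap.mpr ⟨p, hp, by simp [← hep]⟩)

lemma goLeft_def (mid : ℝ) (e : El) : goLeft mid e ↔ e.1 + e.2 ≤ mid ∧ e.1 < mid := Iff.rfl

/-- an element failing `goLeft` in a window with at least two elements lies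
entirely right of the midpoint. -/
lemma mid_le_of_not_goLeft {d j : ℕ} {e₀ : El} {ps : List (El × El)} (hps : ps ≠ [])
    (H2 : ∀ e ∈ elems e₀ ps, 0 ≤ e.2 ∧ (j:ℝ) * ((2:ℝ)⁻¹)^d ≤ e.1 ∧
        e.1 + e.2 ≤ (j:ℝ) * ((2:ℝ)⁻¹)^d + ((2:ℝ)⁻¹)^d)
    (H3 : List.Pairwise Rel (elems e₀ ps))
    (H4 : ∀ e ∈ elems e₀ ps, 0 < e.2 →
        ∃ t k : ℕ, e.2 = ((2:ℝ)⁻¹)^t ∧ e.1 = (k:ℝ) * ((2:ℝ)⁻¹)^t)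
    {e : El} (he : e ∈ elems e₀ ps)
    (hng : ¬ goLeft (((2*j+1:ℕ):ℝ) * ((2:ℝ)⁻¹)^(d+1)) e) :
    ((2*j+1:ℕ):ℝ) * ((2:ℝ)⁻¹)^(d+1) ≤ e.1 := by
  have h2 := H2 e he
  rcases eq_or_lt_of_le h2.1 with hz | hpos
  · exact not_goLeft_zero hz.symm hng
  · obtain ⟨t, k, ht2, ht1⟩ := H4 e he hpos
    have hsm : e.2 ≤ ((2:ℝ)⁻¹)^(d+1) := elem_small hps H2 H3 H4 he hpos
    exact right_of_mid ht2 ht1 hsm (fun hc => hng ((goLeft_def _ _).mpr hc))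

theorem build_spec (n : ℕ) : ∀ (d j : ℕ) (e₀ : El) (ps : List (El × El)),
    (∀ e ∈ elems e₀ ps, 0 ≤ e.2 ∧ (j:ℝ) * ((2:ℝ)⁻¹)^d ≤ e.1 ∧
        e.1 + e.2 ≤ (j:ℝ) * ((2:ℝ)⁻¹)^d + ((2:ℝ)⁻¹)^d) →
    List.Pairwise Rel (elems e₀ ps) →
    (∀ e ∈ elems e₀ ps, 0 < e.2 →
        ∃ t k : ℕ, e.2 = ((2:ℝ)⁻¹)^t ∧ e.1 = (k:ℝ) * ((2:ℝ)⁻¹)^t) →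
    (∀ e ∈ elems e₀ ps, 0 < e.2 → ((2:ℝ)⁻¹)^(d+n) < e.2) →
    List.Forall₂ (fun (e : El) (dep : ℕ) => 0 < e.2 → e.2 ≤ ((2:ℝ)⁻¹)^(d + dep))
      (e₀ :: ps.map (·.2)) (build n ((j:ℝ)*((2:ℝ)⁻¹)^d) (((2:ℝ)⁻¹)^d) e₀ ps).leafDepths ∧
    List.Forall₂ (fun (e : El) (dep : ℕ) => 0 < e.2 → e.2 ≤ ((2:ℝ)⁻¹)^(d + dep + 1))
      (ps.map (·.1)) (build n ((j:ℝ)*((2:ℝ)⁻¹)^d) (((2:ℝ)⁻¹)^d) e₀ ps).internalDepths := by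
  induction n with
  | zero =>
    intro d j e₀ ps H2 H3 H4 H5
    have hnopos : ∀ e ∈ elems e₀ ps, ¬ (0 < e.2) := by
      intro e he hpos
      have h5 := H5 e he hpos
      have h2 := H2 e he
      have : e.2 ≤ ((2:ℝ)⁻¹)^d := by linarith [h2.2.1, h2.2.2]
      simp only [Nat.add_zero] at h5
      linarith
    constructor
    · exact forall₂_of_true
        (fun e he dep hpos => absurd hpos (hnopos e (mem_elems_of_leafmem he)))
        (by simp [build])
    · exact forall₂_of_true
        (fun e he dep hpos => absurd hpos (hnopos e (mem_elems_of_itemmem he)))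
        (by simp [build])
  | succ n IH =>
    intro d j e₀ ps H2 H3 H4 H5
    cases ps with
    | nil =>
      have hbuild : build (n+1) ((j:ℝ)*((2:ℝ)⁻¹)^d) (((2:ℝ)⁻¹)^d) e₀ ([] : List (El × El))
          = BTree.leaf := by
        rw [build]
        rw [if_pos rfl]
      rw [hbuild]
      constructor
      · have h2 := H2 e₀ (by simp [elems_nil])
        refine List.forall₂_cons.mpr ⟨?_, by simp [BTree.leafDepths]⟩
        · intro hpos
          simp only [Nat.add_zero]
          linarith [h2.2.1, h2.2.2]
      · simp [BTree.internalDepths]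
    | cons p ps' =>
      have hne : (p :: ps' : List (El × El)) ≠ [] := by simp
      set a : ℝ := (j:ℝ) * ((2:ℝ)⁻¹)^d with ha
      have hhalf : ((2:ℝ)⁻¹)^d/2 = ((2:ℝ)⁻¹)^(d+1) := by rw [pow_succ]; ring
      have hmid : a + ((2:ℝ)⁻¹)^d/2 = ((2*j+1:ℕ):ℝ) * ((2:ℝ)⁻¹)^(d+1) := by
        rw [ha, pow_succ]; push_cast; ring
      have ha2 : a = ((2*j:ℕ):ℝ) * ((2:ℝ)⁻¹)^(d+1) := by
        rw [ha, pow_succ]; push_cast; ring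
      have H5' : ∀ e ∈ elems e₀ (p :: ps'), 0 < e.2 → ((2:ℝ)⁻¹)^((d+1)+n) < e.2 := by
        intro e he hp
        have := H5 e he hp
        rwa [show d+(n+1) = d+1+n by omega] at this
      by_cases h0 : goLeft (a + ((2:ℝ)⁻¹)^d/2) e₀
      · by_cases hall : ∀ e ∈ elems e₀ (p :: ps'), goLeft (a + ((2:ℝ)⁻¹)^d/2) e
        · -- unary left descent
          have hbuild : build (n+1) a (((2:ℝ)⁻¹)^d) e₀ (p :: ps')
              = build n a (((2:ℝ)⁻¹)^d/2) e₀ (p :: ps') := by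
            rw [build]
            rw [if_neg hne, dif_pos h0, dif_pos hall]
          have H2' : ∀ e ∈ elems e₀ (p :: ps'), 0 ≤ e.2 ∧
              ((2*j:ℕ):ℝ) * ((2:ℝ)⁻¹)^(d+1) ≤ e.1 ∧
              e.1 + e.2 ≤ ((2*j:ℕ):ℝ) * ((2:ℝ)⁻¹)^(d+1) + ((2:ℝ)⁻¹)^(d+1) := by
            intro e he
            have h2 := H2 e he
            have hg := hall e he
            refine ⟨h2.1, by rw [← ha2]; exact h2.2.1, ?_⟩
            have := hg.1
            rw [← ha2, ← hhalf]
            linarith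
          have IH' := IH (d+1) (2*j) e₀ (p :: ps') H2' H3 H4 H5'
          rw [hbuild, hhalf, ha2]
          constructor
          · exact IH'.1.imp (fun {e dep} hp hpos =>
              le_trans (hp hpos) (half_pow_mono (by omega)))
          · exact IH'.2.imp (fun {e dep} hp hpos =>
              le_trans (hp hpos) (half_pow_mono (by omega)))
        · -- split case
          have hex : ∃ e ∈ elems e₀ (p :: ps'), ¬ goLeft (a + ((2:ℝ)⁻¹)^d/2) e := by
            push_neg at hall; exact hall
          obtain ⟨hLall, hRfirst⟩ :=
            (ex_split (a + ((2:ℝ)⁻¹)^d/2) (p :: ps') e₀ h0 hex).choose_spec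
          set I : Fin (p :: ps').length :=
            (ex_split (a + ((2:ℝ)⁻¹)^d/2) (p :: ps') e₀ h0 hex).choose with hI
          set q : El × El := (p :: ps').get I with hq
          have hilen : (I : ℕ) < (p :: ps').length := I.2
          have hdecomp : (p :: ps') = (p :: ps').take (I:ℕ) ++ q :: (p :: ps').drop ((I:ℕ)+1) := by
            conv_lhs => rw [← List.take_append_drop (I : ℕ) (p :: ps')]
            rw [List.drop_eq_getElem_cons hilen, hq, List.get_eq_getElem]
          have hsplit : elems e₀ (p :: ps')
              = elems e₀ ((p :: ps').take (I:ℕ))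
                ++ q.1 :: elems q.2 ((p :: ps').drop ((I:ℕ)+1)) := by
            conv_lhs => rw [hdecomp]
            rw [elems_append]
            congr 1
          have H3x := H3
          rw [hsplit] at H3x
          obtain ⟨H3L, H3Rc, hcross⟩ := List.pairwise_append.mp H3x
          obtain ⟨hq1rel, H3R⟩ := List.pairwise_cons.mp H3Rc
          have hmemL : ∀ e ∈ elems e₀ ((p :: ps').take (I:ℕ)), e ∈ elems e₀ (p :: ps') := by
            intro e he; rw [hsplit]; exact List.mem_append_left _ he
          have hmemR : ∀ e ∈ elems q.2 ((p :: ps').drop ((I:ℕ)+1)), e ∈ elems e₀ (p :: ps') := by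
            intro e he; rw [hsplit]
            exact List.mem_append_right _ (List.mem_cons_of_mem _ he)
          have hq1mem : q.1 ∈ elems e₀ (p :: ps') := by
            rw [hsplit]; exact List.mem_append_right _ (List.mem_cons_self)
          have hR : ∀ f ∈ elems q.2 ((p :: ps').drop ((I:ℕ)+1)),
              ¬ goLeft (a + ((2:ℝ)⁻¹)^d/2) f := by
            intro f hf hgf
            rcases hRfirst with hq1 | hq2
            · exact hq1 (goLeft_of_rel (hq1rel f hf) hgf)
            · rw [elems_eq_cons_flat] at hf
              rcases List.mem_cons.mp hf with rfl | hf'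
              · exact hq2 hgf
              · have hrel : Rel q.2 f := by
                  rw [elems_eq_cons_flat] at H3R
                  exact (List.pairwise_cons.mp H3R).1 f hf'
                exact hq2 (goLeft_of_rel hrel hgf)
          have H2L : ∀ e ∈ elems e₀ ((p :: ps').take (I:ℕ)), 0 ≤ e.2 ∧
              ((2*j:ℕ):ℝ) * ((2:ℝ)⁻¹)^(d+1) ≤ e.1 ∧
              e.1 + e.2 ≤ ((2*j:ℕ):ℝ) * ((2:ℝ)⁻¹)^(d+1) + ((2:ℝ)⁻¹)^(d+1) := by
            intro e he
            have h2 := H2 e (hmemL e he)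
            have hg := hLall e he
            refine ⟨h2.1, by rw [← ha2]; exact h2.2.1, ?_⟩
            have := hg.1
            rw [← ha2, ← hhalf]
            linarith
          have H2R : ∀ e ∈ elems q.2 ((p :: ps').drop ((I:ℕ)+1)), 0 ≤ e.2 ∧
              ((2*j+1:ℕ):ℝ) * ((2:ℝ)⁻¹)^(d+1) ≤ e.1 ∧
              e.1 + e.2 ≤ ((2*j+1:ℕ):ℝ) * ((2:ℝ)⁻¹)^(d+1) + ((2:ℝ)⁻¹)^(d+1) := by
            intro e he
            have h2 := H2 e (hmemR e he)
            refine ⟨h2.1, mid_le_of_not_goLeft hne H2 H3 H4 (hmemR e he)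
              (by rw [← hmid]; exact hR e he), ?_⟩
            have := h2.2.2
            rw [← hmid, ← hhalf]
            linarith
          have IHL := IH (d+1) (2*j) e₀ ((p :: ps').take (I:ℕ)) H2L H3L
            (fun e he => H4 e (hmemL e he)) (fun e he => H5' e (hmemL e he))
          have IHR := IH (d+1) (2*j+1) q.2 ((p :: ps').drop ((I:ℕ)+1)) H2R H3R
            (fun e he => H4 e (hmemR e he)) (fun e he => H5' e (hmemR e he))
          have hbuild : build (n+1) a (((2:ℝ)⁻¹)^d) e₀ (p :: ps')
              = BTree.node (build n a (((2:ℝ)⁻¹)^d/2) e₀ ((p :: ps').take (I:ℕ)))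
                  (build n (a + ((2:ℝ)⁻¹)^d/2) (((2:ℝ)⁻¹)^d/2) q.2
                    ((p :: ps').drop ((I:ℕ)+1))) := by
            rw [build]
            rw [if_neg hne, dif_pos h0, dif_neg hall]
          rw [hbuild, hmid, hhalf, ha2]
          simp only [leafDepths_node, internalDepths_node]
          constructor
          · have hleaves : e₀ :: (p :: ps').map (·.2)
                = (e₀ :: ((p :: ps').take (I:ℕ)).map (·.2))
                  ++ (q.2 :: ((p :: ps').drop ((I:ℕ)+1)).map (·.2)) := by
              conv_lhs => rw [hdecomp]
              simp
            rw [hleaves]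
            refine List.rel_append ?_ ?_
            · rw [List.forall₂_map_right_iff]
              exact IHL.1.imp (fun {e dep} hp hpos => by
                have := hp hpos
                rwa [show d+1+dep = d+(dep+1) by omega] at this)
            · rw [List.forall₂_map_right_iff]
              exact IHR.1.imp (fun {e dep} hp hpos => by
                have := hp hpos
                rwa [show d+1+dep = d+(dep+1) by omega] at this)
          · have hitems : (p :: ps').map (·.1)
                = ((p :: ps').take (I:ℕ)).map (·.1)
                  ++ (q.1 :: ((p :: ps').drop ((I:ℕ)+1)).map (·.1)) := by
              conv_lhs => rw [hdecomp]
              simp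
            rw [hitems, List.append_assoc, List.singleton_append]
            refine List.rel_append ?_ (List.forall₂_cons.mpr ⟨?_, ?_⟩)
            · rw [List.forall₂_map_right_iff]
              exact IHL.2.imp (fun {e dep} hp hpos => by
                have := hp hpos
                rwa [show d+1+dep+1 = d+(dep+1)+1 by omega] at this)
            · intro hpos
              have := elem_small hne H2 H3 H4 hq1mem hpos
              simpa using this
            · rw [List.forall₂_map_right_iff]
              exact IHR.2.imp (fun {e dep} hp hpos => by
                have := hp hpos
                rwa [show d+1+dep+1 = d+(dep+1)+1 by omega] at this)
      · -- unary right descent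
        have hbuild : build (n+1) a (((2:ℝ)⁻¹)^d) e₀ (p :: ps')
            = build n (a + ((2:ℝ)⁻¹)^d/2) (((2:ℝ)⁻¹)^d/2) e₀ (p :: ps') := by
          rw [build]
          rw [if_neg hne, dif_neg h0]
        have hAllNg : ∀ e ∈ elems e₀ (p :: ps'), ¬ goLeft (a + ((2:ℝ)⁻¹)^d/2) e := by
          intro f hf hgf
          rcases List.mem_cons.mp hf with rfl | hf'
          · exact h0 hgf
          · exact h0 (goLeft_of_rel ((List.pairwise_cons.mp H3).1 f hf') hgf)
        have H2' : ∀ e ∈ elems e₀ (p :: ps'), 0 ≤ e.2 ∧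
            ((2*j+1:ℕ):ℝ) * ((2:ℝ)⁻¹)^(d+1) ≤ e.1 ∧
            e.1 + e.2 ≤ ((2*j+1:ℕ):ℝ) * ((2:ℝ)⁻¹)^(d+1) + ((2:ℝ)⁻¹)^(d+1) := by
          intro e he
          have h2 := H2 e he
          refine ⟨h2.1, ?_, ?_⟩
          · exact mid_le_of_not_goLeft hne H2 H3 H4 he (by rw [← hmid]; exact hAllNg e he)
          · have := h2.2.2
            rw [← hmid, ← hhalf]
            linarith
        have IH' := IH (d+1) (2*j+1) e₀ (p :: ps') H2' H3 H4 H5'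
        rw [hbuild, hmid, hhalf]
        constructor
        · exact IH'.1.imp (fun {e dep} hp hpos =>
            le_trans (hp hpos) (half_pow_mono (by omega)))
        · exact IH'.2.imp (fun {e dep} hp hpos =>
            le_trans (hp hpos) (half_pow_mono (by omega)))

lemma half_pow_lt {t T : ℕ} (h : t < T) : ((2:ℝ)⁻¹)^T < (2⁻¹)^t := by
  have h1 : ((2:ℝ)⁻¹)^T ≤ (2⁻¹)^(t+1) := half_pow_mono h
  have h0 : (0:ℝ) < (2⁻¹)^t := by positivity
  have h2 : ((2:ℝ)⁻¹)^(t+1) = (2⁻¹)^t * 2⁻¹ := pow_succ _ _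
  nlinarith

lemma sum_alt (w : ℕ → ℝ) : ∀ k, (∑ v ∈ Finset.range (2*k+1), w v)
    = (∑ u ∈ Finset.range (k+1), w (2*u)) + (∑ u ∈ Finset.range k, w (2*u+1)) := by
  intro k
  induction k with
  | zero => simp
  | succ k ih =>
    rw [show 2*(k+1)+1 = (2*k+1)+1+1 by ring, Finset.sum_range_succ, Finset.sum_range_succ, ih,
      Finset.sum_range_succ (fun u => w (2*u)) (k+1), Finset.sum_range_succ (fun u => w (2*u+1)) k]
    rw [show 2*(k+1) = 2*k+1+1 by ring]
    ring

lemma flat_pairs (f : ℕ → El) : ∀ (k : ℕ),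
    ((List.range k).map (fun j => (f (2*j+1), f (2*j+2)))).flatMap (fun p => [p.1, p.2])
      = (List.range (2*k)).map (fun v => f (v+1)) := by
  intro k
  induction k with
  | zero => simp
  | succ k ih =>
    rw [List.range_succ, List.map_append, List.flatMap_append, ih]
    rw [show 2*(k+1) = (2*k+1)+1 by ring, List.range_succ,
      show (2*k+1) = (2*k)+1 from rfl, List.range_succ]
    simp [List.map_append]

lemma elems_pairs (f : ℕ → El) (k : ℕ) :
    elems (f 0) ((List.range k).map (fun j => (f (2*j+1), f (2*j+2))))
      = (List.range (2*k+1)).map f := by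
  rw [elems_eq_cons_flat, flat_pairs, List.range_succ_eq_map]
  simp [Function.comp_def]

lemma pairwise_of_consec {f : ℕ → El} {K : ℕ}
    (h : ∀ u, u + 1 < K → Rel (f u) (f (u+1))) :
    List.Pairwise Rel ((List.range K).map f) := by
  rw [List.pairwise_map]
  have htrans : ∀ v u, u < v → v < K → Rel (f u) (f v) := by
    intro v
    induction v with
    | zero => omega
    | succ v ihv =>
      intro u huv hvK
      rcases Nat.lt_or_ge u v with h' | h'
      · exact Rel.trans (ihv u h' (by omega)) (h v (by omega))
      · have : u = v := by omega
        subst this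
        exact h u (by omega)
  refine List.Pairwise.imp_of_mem ?_ List.pairwise_lt_range
  intro a b ha hb hab
  exact htrans b a hab (List.mem_range.mp hb)

lemma tq_bounds {q : ℝ} (h0 : 0 < q) (h1 : q ≤ 1) :
    q/4 ≤ ((2:ℝ)⁻¹)^(⌊Real.logb 2 (2/q)⌋₊ + 1) ∧
    ((2:ℝ)⁻¹)^(⌊Real.logb 2 (2/q)⌋₊ + 1) < q/2 := by
  set x : ℝ := Real.logb 2 (2/q) with hx
  have h2q : (2:ℝ) ≤ 2/q := by
    rw [le_div_iff₀ h0]; linarith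
  have hx1 : (1:ℝ) ≤ x := by
    rw [hx, show (1:ℝ) = Real.logb 2 2 from (Real.logb_self_eq_one (by norm_num)).symm]
    exact (Real.logb_le_logb (by norm_num) (by norm_num) (by positivity)).mpr h2q
  have hx0 : (0:ℝ) ≤ x := by linarith
  set T : ℕ := ⌊x⌋₊ + 1 with hT
  have hrw : (2:ℝ) ^ x = 2/q := Real.rpow_logb (by norm_num) (by norm_num) (by positivity)
  have hTcast : ((T:ℕ):ℝ) = (⌊x⌋₊ : ℝ) + 1 := by rw [hT, Nat.cast_add, Nat.cast_one]
  have hup : (2:ℝ)/q < 2^T := by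
    have hlt : x < ((T:ℕ):ℝ) := by rw [hTcast]; exact Nat.lt_floor_add_one x
    calc (2:ℝ)/q = 2 ^ x := hrw.symm
      _ < 2 ^ ((T:ℕ):ℝ) := Real.rpow_lt_rpow_left_iff (by norm_num) |>.mpr hlt
      _ = 2 ^ T := by rw [Real.rpow_natCast]
  have hdown : (2:ℝ)^T ≤ 4/q := by
    have hle : ((T:ℕ):ℝ) ≤ x + 1 := by
      rw [hTcast]
      have := Nat.floor_le hx0
      linarith
    calc (2:ℝ)^T = 2 ^ ((T:ℕ):ℝ) := by rw [Real.rpow_natCast]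
      _ ≤ 2 ^ (x+1) := Real.rpow_le_rpow_left_iff (by norm_num) |>.mpr hle
      _ = 2 ^ x * 2 := by rw [Real.rpow_add (by norm_num), Real.rpow_one]
      _ = 4/q := by rw [hrw]; ring
  have hpowpos : (0:ℝ) < 2^T := by positivity
  have hq4 : (2:ℝ)^T * q ≤ 4 := (le_div_iff₀ h0).mp hdown
  have hq2 : (2:ℝ) < 2^T * q := (div_lt_iff₀ h0).mp hup
  constructor
  · rw [inv_pow, inv_eq_one_div, div_le_div_iff₀ (by norm_num) hpowpos]
    linarith
  · rw [inv_pow, inv_eq_one_div, div_lt_div_iff₀ hpowpos (by norm_num)]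
    linarith

lemma log_bound {q : ℝ} {s : ℕ} (h0 : 0 < q) (hle : q ≤ 4*((2:ℝ)⁻¹)^s) :
    (s:ℝ) ≤ Real.logb 2 q⁻¹ + 2 := by
  have h1 : Real.logb 2 q ≤ Real.logb 2 (4*((2:ℝ)⁻¹)^s) :=
    (Real.logb_le_logb (by norm_num) h0 (by positivity)).mpr hle
  have h2 : Real.logb 2 (4*((2:ℝ)⁻¹)^s) = 2 - s := by
    rw [Real.logb_mul (by norm_num) (by positivity)]
    rw [Real.logb_pow]
    rw [Real.logb_inv, Real.logb_self_eq_one (by norm_num)]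
    rw [show (4:ℝ) = 2^(2:ℕ) by norm_num, Real.logb_pow,
      Real.logb_self_eq_one (by norm_num)]
    ring
  rw [Real.logb_inv]
  linarith [h1, h2.le, h2.ge]

lemma el_props_pos {sv wv : ℝ} (hs0 : 0 ≤ sv) (hpos : 0 < wv) (h1 : wv ≤ 1) :
    0 < ((2:ℝ)⁻¹)^(⌊Real.logb 2 (2/wv)⌋₊ + 1) ∧
    sv < ((⌊(sv + wv / 2) * 2^(⌊Real.logb 2 (2/wv)⌋₊ + 1)⌋₊ : ℕ):ℝ)
        * ((2:ℝ)⁻¹)^(⌊Real.logb 2 (2/wv)⌋₊ + 1) ∧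
    ((⌊(sv + wv / 2) * 2^(⌊Real.logb 2 (2/wv)⌋₊ + 1)⌋₊ : ℕ):ℝ)
        * ((2:ℝ)⁻¹)^(⌊Real.logb 2 (2/wv)⌋₊ + 1) + ((2:ℝ)⁻¹)^(⌊Real.logb 2 (2/wv)⌋₊ + 1)
      < sv + wv ∧
    wv / 4 ≤ ((2:ℝ)⁻¹)^(⌊Real.logb 2 (2/wv)⌋₊ + 1) := by
  set T : ℕ := ⌊Real.logb 2 (2/wv)⌋₊ + 1 with hT
  obtain ⟨hb1, hb2⟩ := tq_bounds hpos h1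
  set lam : ℝ := ((2:ℝ)⁻¹)^T with hlam
  set xi : ℝ := sv + wv/2 with hxi
  set c : ℝ := ((⌊xi * 2^T⌋₊ : ℕ):ℝ) * lam with hc
  have hp2 : (0:ℝ) < (2:ℝ)^T := by positivity
  have hinv : lam = ((2:ℝ)^T)⁻¹ := by rw [hlam, inv_pow]
  have hxi0 : (0:ℝ) ≤ xi := by rw [hxi]; linarith
  have hfl : ((⌊xi * 2^T⌋₊:ℕ):ℝ) ≤ xi * 2^T := Nat.floor_le (by positivity)
  have hfl2 : xi * 2^T < ((⌊xi * 2^T⌋₊:ℕ):ℝ) + 1 := Nat.lt_floor_add_one _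
  have hcle : c ≤ xi := by
    calc c = ((⌊xi * 2^T⌋₊:ℕ):ℝ) * ((2:ℝ)^T)⁻¹ := by rw [hc, hinv]
      _ ≤ (xi * 2^T) * ((2:ℝ)^T)⁻¹ :=
          mul_le_mul_of_nonneg_right hfl (by positivity)
      _ = xi := by field_simp
  have hcgt : xi < c + lam := by
    have h3 : xi = (xi * 2^T) * ((2:ℝ)^T)⁻¹ := by field_simp
    have h4 : (xi * 2^T) * ((2:ℝ)^T)⁻¹
        < (((⌊xi * 2^T⌋₊:ℕ):ℝ) + 1) * ((2:ℝ)^T)⁻¹ :=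
      mul_lt_mul_of_pos_right hfl2 (by positivity)
    have h5 : (((⌊xi * 2^T⌋₊:ℕ):ℝ) + 1) * ((2:ℝ)^T)⁻¹ = c + lam := by
      rw [hc, hinv]; ring
    have h6 := h4
    rw [h5] at h6
    rw [← h3] at h6
    exact h6
  refine ⟨by positivity, ?_, ?_, hb1⟩
  · have : xi - lam < c := by linarith
    have h6 : sv < xi - lam := by rw [hxi]; linarith
    linarith
  · have h7 : c + lam ≤ xi + lam := by linarith
    have h8 : xi + lam < sv + wv := by rw [hxi]; linarith
    linarith

end Meh


open Meh

/-- Mehlhorn's Method 1 (weight-balancing) guarantee: for weights `β₁,…,β_m`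
(internal nodes, symmetric order) and `α₀,…,α_m` (leaves, left-to-right)
summing to 1, there is a binary search tree with search cost at most `H + 2`. -/
theorem nearly_optimal_bst_method1
    (m : ℕ) (hm : 1 ≤ m)
    (β : Fin m → ℝ) (α : Fin (m + 1) → ℝ)
    (hβ : ∀ j, 0 ≤ β j) (hα : ∀ i, 0 ≤ α i)
    (hsum : (∑ j, β j) + (∑ i, α i) = 1) :
    ∃ T : BTree,
      T.internalDepths.length = m ∧ T.leafDepths.length = m + 1 ∧
      (∑ j : Fin m, β j * ((T.internalDepths.getD j 0 : ℝ) + 1))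
        + (∑ i : Fin (m + 1), α i * (T.leafDepths.getD i 0 : ℝ))
      ≤ ((∑ j, β j * Real.logb 2 (β j)⁻¹) + (∑ i, α i * Real.logb 2 (α i)⁻¹)) + 2 := by
  classical
  set w : ℕ → ℝ := fun u =>
    if u % 2 = 0 then (if h : u / 2 < m + 1 then α ⟨u/2, h⟩ else 0)
    else (if h : u / 2 < m then β ⟨u/2, h⟩ else 0) with hw
  set S : ℕ → ℝ := fun u => ∑ v ∈ Finset.range u, w v with hS
  set t : ℝ → ℕ := fun x => ⌊Real.logb 2 (2/x)⌋₊ + 1 with ht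
  set el : ℕ → El := fun u =>
    if 0 < w u then
      (((⌊(S u + w u / 2) * 2^(t (w u))⌋₊ : ℕ) : ℝ) * ((2:ℝ)⁻¹)^(t (w u)),
        ((2:ℝ)⁻¹)^(t (w u)))
    else (S u, 0) with hel
  have hw0 : ∀ u, 0 ≤ w u := by
    intro u
    simp only [hw]
    split_ifs
    · exact hα _
    · exact le_refl 0
    · exact hβ _
    · exact le_refl 0
  have hwodd : ∀ j : Fin m, w (2*(j:ℕ)+1) = β j := by
    intro j
    have h2 : (2*(j:ℕ)+1) / 2 = (j:ℕ) := by omega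
    simp only [hw, h2]
    rw [if_neg (by omega), dif_pos j.isLt]
  have hweven : ∀ i : Fin (m+1), w (2*(i:ℕ)) = α i := by
    intro i
    have h2 : (2*(i:ℕ)) / 2 = (i:ℕ) := by omega
    simp only [hw, h2]
    rw [if_pos (by omega), dif_pos i.isLt]
  have hSsucc : ∀ u, S (u+1) = S u + w u := by
    intro u
    simp only [hS]
    exact Finset.sum_range_succ w u
  have hS0 : ∀ u, 0 ≤ S u := by
    intro u
    simp only [hS]
    exact Finset.sum_nonneg (fun v _ => hw0 v)
  have hStot : S (2*m+1) = 1 := by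
    simp only [hS]
    rw [Meh.sum_alt w m]
    have hA : ∑ u ∈ Finset.range (m+1), w (2*u) = ∑ i, α i := by
      rw [← Fin.sum_univ_eq_sum_range (fun u => w (2*u)) (m+1)]
      exact Finset.sum_congr rfl (fun i _ => hweven i)
    have hB : ∑ u ∈ Finset.range m, w (2*u+1) = ∑ j, β j := by
      rw [← Fin.sum_univ_eq_sum_range (fun u => w (2*u+1)) m]
      exact Finset.sum_congr rfl (fun j _ => hwodd j)
    rw [hA, hB]
    linarith
  have hS1 : ∀ u, u ≤ 2*m+1 → S u ≤ 1 := by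
    intro u hu
    rw [← hStot]
    simp only [hS]
    exact Finset.sum_le_sum_of_subset_of_nonneg
      (Finset.range_subset_range.mpr hu) (fun v _ _ => hw0 v)
  have hw1 : ∀ u, u ≤ 2*m → w u ≤ 1 := by
    intro u hu
    have h1 := hSsucc u
    have h2 := hS1 (u+1) (by omega)
    have h3 := hS0 u
    linarith
  have hkey : ∀ u, u ≤ 2*m →
      0 ≤ (el u).2 ∧ S u ≤ (el u).1 ∧ (el u).1 + (el u).2 ≤ S (u+1) ∧
      (0 < w u → 0 < (el u).2 ∧ S u < (el u).1 ∧ (el u).1 + (el u).2 < S (u+1) ∧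
        w u / 4 ≤ (el u).2 ∧ (el u).2 = ((2:ℝ)⁻¹)^(t (w u)) ∧
        ∃ k : ℕ, (el u).1 = (k:ℝ)*((2:ℝ)⁻¹)^(t (w u))) ∧
      (¬ 0 < w u → (el u).2 = 0) := by
    intro u hu
    by_cases hpos : 0 < w u
    · have helu : el u
          = (((⌊(S u + w u / 2) * 2^(t (w u))⌋₊ : ℕ) : ℝ) * ((2:ℝ)⁻¹)^(t (w u)),
              ((2:ℝ)⁻¹)^(t (w u))) := by
        simp only [hel]
        rw [if_pos hpos]
      have htw : t (w u) = ⌊Real.logb 2 (2 / w u)⌋₊ + 1 := by simp only [ht]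
      have hP := Meh.el_props_pos (hS0 u) hpos (hw1 u hu)
      rw [← htw] at hP
      rw [helu, hSsucc u]
      dsimp only
      refine ⟨by positivity, hP.2.1.le, hP.2.2.1.le, ?_, fun h => absurd hpos h⟩
      intro _
      exact ⟨by positivity, hP.2.1, hP.2.2.1, hP.2.2.2, rfl, ⟨_, rfl⟩⟩
    · have helu : el u = (S u, 0) := by
        simp only [hel]
        rw [if_neg hpos]
      have hwz : w u = 0 := le_antisymm (not_lt.mp hpos) (hw0 u)
      rw [helu, hSsucc u, hwz]
      dsimp only
      refine ⟨le_refl 0, le_refl _, by linarith, fun h => absurd h (lt_irrefl 0), fun _ => rfl⟩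
  set ps : List (El × El) := (List.range m).map (fun j' => (el (2*j'+1), el (2*j'+2)))
    with hps
  have helems : elems (el 0) ps = (List.range (2*m+1)).map el := by
    rw [hps]
    exact Meh.elems_pairs el m
  have H2 : ∀ e ∈ elems (el 0) ps, 0 ≤ e.2 ∧ (((0:ℕ):ℝ)) * ((2:ℝ)⁻¹)^0 ≤ e.1 ∧
      e.1 + e.2 ≤ (((0:ℕ):ℝ)) * ((2:ℝ)⁻¹)^0 + ((2:ℝ)⁻¹)^0 := by
    intro e he
    rw [helems] at he
    obtain ⟨u, hu, rfl⟩ := List.mem_map.mp he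
    have hu' : u ≤ 2*m := by have := List.mem_range.mp hu; omega
    obtain ⟨k1, k2, k3, _, _⟩ := hkey u hu'
    have hs1 := hS1 (u+1) (by omega)
    have hs0 := hS0 u
    have hz : (((0:ℕ):ℝ)) * ((2:ℝ)⁻¹)^0 = 0 := by norm_num
    rw [hz]
    have ho : ((2:ℝ)⁻¹)^(0:ℕ) = 1 := by norm_num
    rw [ho]
    exact ⟨k1, by linarith, by linarith⟩
  have H3 : List.Pairwise Rel (elems (el 0) ps) := by
    rw [helems]
    apply Meh.pairwise_of_consec
    intro u hu1
    have huA : u ≤ 2*m := by omega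
    have huB : u+1 ≤ 2*m := by omega
    obtain ⟨ka1, ka2, ka3, ka4, ka5⟩ := hkey u huA
    obtain ⟨kb1, kb2, kb3, kb4, kb5⟩ := hkey (u+1) huB
    refine ⟨ka1, le_trans ka3 kb2, ?_⟩
    rintro (hp | hp)
    · have hwu : 0 < w u := by
        by_contra hno
        rw [ka5 hno] at hp
        exact lt_irrefl 0 hp
      exact lt_of_lt_of_le (ka4 hwu).2.2.1 kb2
    · have hwu : 0 < w (u+1) := by
        by_contra hno
        rw [kb5 hno] at hp
        exact lt_irrefl 0 hp
      exact lt_of_le_of_lt ka3 (kb4 hwu).2.1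
  have H4 : ∀ e ∈ elems (el 0) ps, 0 < e.2 →
      ∃ tt k : ℕ, e.2 = ((2:ℝ)⁻¹)^tt ∧ e.1 = (k:ℝ)*((2:ℝ)⁻¹)^tt := by
    intro e he hp
    rw [helems] at he
    obtain ⟨u, hu, rfl⟩ := List.mem_map.mp he
    have hu' : u ≤ 2*m := by have := List.mem_range.mp hu; omega
    obtain ⟨_, _, _, k4, k5⟩ := hkey u hu'
    have hwu : 0 < w u := by
      by_contra hno
      rw [k5 hno] at hp
      exact lt_irrefl 0 hp
    obtain ⟨_, _, _, _, hsnd, k, hfst⟩ := k4 hwu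
    exact ⟨t (w u), k, hsnd, hfst⟩
  set N : ℕ := 1 + ∑ u ∈ Finset.range (2*m+1), t (w u) with hN
  have H5 : ∀ e ∈ elems (el 0) ps, 0 < e.2 → ((2:ℝ)⁻¹)^(0+N) < e.2 := by
    intro e he hp
    rw [helems] at he
    obtain ⟨u, hu, rfl⟩ := List.mem_map.mp he
    have hu' : u ≤ 2*m := by have := List.mem_range.mp hu; omega
    obtain ⟨_, _, _, k4, k5⟩ := hkey u hu'
    have hwu : 0 < w u := by
      by_contra hno
      rw [k5 hno] at hp
      exact lt_irrefl 0 hp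
    obtain ⟨_, _, _, _, hsnd, _⟩ := k4 hwu
    rw [hsnd]
    refine Meh.half_pow_lt ?_
    have h6 : t (w u) ≤ ∑ u ∈ Finset.range (2*m+1), t (w u) := by
      simpa using Finset.single_le_sum (f := fun v => t (w v)) (fun i _ => Nat.zero_le _)
        (Finset.mem_range.mpr (List.mem_range.mp hu))
    omega
  have spec := Meh.build_spec N 0 0 (el 0) ps H2 H3 H4 H5
  set T : BTree := build N (((0:ℕ):ℝ) * ((2:ℝ)⁻¹)^0) (((2:ℝ)⁻¹)^0) (el 0) ps with hTdef
  have hpslen : ps.length = m := by rw [hps]; simp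
  have hleaflen : T.leafDepths.length = m + 1 := by
    rw [← spec.1.length_eq]
    simp [hpslen]
  have hintlen : T.internalDepths.length = m := by
    rw [← spec.2.length_eq]
    simp [hpslen]
  refine ⟨T, hintlen, hleaflen, ?_⟩
  have hitem : ∀ j : Fin m,
      β j * ((T.internalDepths.getD (j:ℕ) 0 : ℝ) + 1)
        ≤ β j * Real.logb 2 (β j)⁻¹ + 2 * β j := by
    intro j
    rcases eq_or_lt_of_le (hβ j) with hz | hpos
    · rw [← hz]; simp
    · have hu' : 2*(j:ℕ)+1 ≤ 2*m := by have := j.isLt; omega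
      have hj1 : (j:ℕ) < (ps.map (fun x => x.1)).length := by
        simp [hpslen, j.isLt]
      have hj2 : (j:ℕ) < T.internalDepths.length := by rw [hintlen]; exact j.isLt
      have hget := (List.forall₂_iff_get.mp spec.2).2 (j:ℕ) hj1 hj2
      have hidx : (ps.map (fun x => x.1)).get ⟨(j:ℕ), hj1⟩ = el (2*(j:ℕ)+1) := by
        simp only [List.get_eq_getElem, hps, List.getElem_map, List.getElem_range]
      rw [hidx] at hget
      obtain ⟨_, _, _, k4, _⟩ := hkey _ hu'
      have hwpos : 0 < w (2*(j:ℕ)+1) := by rw [hwodd j]; exact hpos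
      obtain ⟨hp2, _, _, hq4, hsnd, _⟩ := k4 hwpos
      have hdep := hget hp2
      have hgetD : T.internalDepths.getD (j:ℕ) 0
          = T.internalDepths.get ⟨(j:ℕ), hj2⟩ := by
        rw [List.get_eq_getElem]
        exact List.getD_eq_getElem _ _ hj2
      rw [hgetD]
      set D : ℕ := T.internalDepths.get ⟨(j:ℕ), hj2⟩ with hD
      have hexp : (0:ℕ) + D + 1 = D + 1 := by omega
      rw [hexp] at hdep
      have hbound : β j ≤ 4*((2:ℝ)⁻¹)^(D+1) := by
        rw [← hwodd j]
        linarith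
      have hlog := Meh.log_bound hpos hbound
      push_cast at hlog
      have hmul := mul_le_mul_of_nonneg_left hlog (le_of_lt hpos)
      have hring : β j * (Real.logb 2 (β j)⁻¹ + 2)
          = β j * Real.logb 2 (β j)⁻¹ + 2 * β j := by ring
      linarith
  have hleaf : ∀ i : Fin (m+1),
      α i * ((T.leafDepths.getD (i:ℕ) 0 : ℝ))
        ≤ α i * Real.logb 2 (α i)⁻¹ + 2 * α i := by
    intro i
    rcases eq_or_lt_of_le (hα i) with hz | hpos
    · rw [← hz]; simp
    · have hu' : 2*(i:ℕ) ≤ 2*m := by have := i.isLt; omega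
      have hi1 : (i:ℕ) < (el 0 :: ps.map (fun x => x.2)).length := by
        simp [hpslen, i.isLt]
      have hi2 : (i:ℕ) < T.leafDepths.length := by rw [hleaflen]; exact i.isLt
      have hget := (List.forall₂_iff_get.mp spec.1).2 (i:ℕ) hi1 hi2
      have hidx : (el 0 :: ps.map (fun x => x.2)).get ⟨(i:ℕ), hi1⟩ = el (2*(i:ℕ)) := by
        rcases i with ⟨iv, hiv⟩
        cases iv with
        | zero => simp
        | succ k =>
          have hkm : k < m := by omega
          simp only [List.get_cons_succ, List.get_eq_getElem, List.getElem_cons_succ, hps,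
            List.getElem_map, List.getElem_range]
          rw [show 2*(k+1) = 2*k+2 by ring]
      rw [hidx] at hget
      obtain ⟨_, _, _, k4, _⟩ := hkey _ hu'
      have hwpos : 0 < w (2*(i:ℕ)) := by rw [hweven i]; exact hpos
      obtain ⟨hp2, _, _, hq4, hsnd, _⟩ := k4 hwpos
      have hdep := hget hp2
      have hgetD : T.leafDepths.getD (i:ℕ) 0
          = T.leafDepths.get ⟨(i:ℕ), hi2⟩ := by
        rw [List.get_eq_getElem]
        exact List.getD_eq_getElem _ _ hi2
      rw [hgetD]
      set D : ℕ := T.leafDepths.get ⟨(i:ℕ), hi2⟩ with hD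
      have hexp : (0:ℕ) + D = D := by omega
      rw [hexp] at hdep
      have hbound : α i ≤ 4*((2:ℝ)⁻¹)^D := by
        rw [← hweven i]
        linarith
      have hlog := Meh.log_bound hpos hbound
      have hmul := mul_le_mul_of_nonneg_left hlog (le_of_lt hpos)
      have hring : α i * (Real.logb 2 (α i)⁻¹ + 2)
          = α i * Real.logb 2 (α i)⁻¹ + 2 * α i := by ring
      linarith
  have sum1 : ∑ j : Fin m, β j * ((T.internalDepths.getD (j:ℕ) 0 : ℝ) + 1)
      ≤ ∑ j : Fin m, (β j * Real.logb 2 (β j)⁻¹ + 2 * β j) :=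
    Finset.sum_le_sum (fun j _ => hitem j)
  have sum2 : ∑ i : Fin (m+1), α i * ((T.leafDepths.getD (i:ℕ) 0 : ℝ))
      ≤ ∑ i : Fin (m+1), (α i * Real.logb 2 (α i)⁻¹ + 2 * α i) :=
    Finset.sum_le_sum (fun i _ => hleaf i)
  have e1 : ∑ j : Fin m, (β j * Real.logb 2 (β j)⁻¹ + 2 * β j)
      = (∑ j, β j * Real.logb 2 (β j)⁻¹) + 2*(∑ j, β j) := by
    rw [Finset.sum_add_distrib, Finset.mul_sum]
  have e2 : ∑ i : Fin (m+1), (α i * Real.logb 2 (α i)⁻¹ + 2 * α i)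
      = (∑ i, α i * Real.logb 2 (α i)⁻¹) + 2*(∑ i, α i) := by
    rw [Finset.sum_add_distrib, Finset.mul_sum]
  linarith
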